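/- Let V be a finite-dimensional real inner product space and R : Λ²V → Λ²V a self-adjoint linear map satisfying the first Bianchi identity. Suppose V = ⊕ᵢ Vᵢ is an orthogonal decomposition with each Vᵢ invariant under every endomorphism in the image of R. Then for X₁, X₂ ∈ Vᵢ and Y ∈ Vⱼ with j ≠ i, one has R(X₁∧X₂)Y = 0; that is, R(Λ²Vᵢ) ⊆ Λ²Vᵢ. -/
import Mathlib


open scoped RealInnerProductSpace BigOperators

lemma curvature_off_diagonal_vanish
    {V : Type*} [NormedAddCommGroup V] [InnerProductSpace ℝ V] [FiniteDimensional ℝ V]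
    {ι : Type*} (Vs : ι → Submodule ℝ V)
    (R : V →ₗ[ℝ] V →ₗ[ℝ] (V →ₗ[ℝ] V))
    (hpair : ∀ X Y Z W : V, ⟪R X Y Z, W⟫ = ⟪R Z W X, Y⟫)
    (hortho : ∀ i j, i ≠ j → ∀ x ∈ Vs i, ∀ y ∈ Vs j, ⟪x, y⟫ = 0)
    (hinv : ∀ i (X Y : V), (Vs i).map (R X Y) ≤ Vs i)
    {i j : ι} (hij : i ≠ j) {X Y : V}
    (hX : X ∈ Vs i) (hY : Y ∈ Vs j) :
    R X Y = 0 := by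
  ext Z
  have key : ∀ W : V, ⟪R X Y Z, W⟫ = 0 := by
    intro W
    rw [hpair]
    exact hortho i j hij _ (hinv i Z W (Submodule.mem_map_of_mem hX)) Y hY
  simpa [real_inner_self_eq_norm_sq, pow_two, mul_self_eq_zero, norm_eq_zero]
    using key (R X Y Z)

/-- Let `R` be an algebraic curvature operator (bilinear map
`(X, Y) ↦ R(X∧Y)` with anti-symmetric values, pair-symmetric/self-adjoint, satisfying the
first Bianchi identity).  If `V = ⊕ᵢ Vᵢ` is an orthogonal decomposition with each `Vᵢ`
invariant under every endomorphism in the image of `R`, then for `X₁, X₂ ∈ Vᵢ` and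
`Y ∈ Vⱼ` with `j ≠ i` one has `R(X₁∧X₂)Y = 0`; that is, `R(Λ²Vᵢ) ⊆ Λ²Vᵢ`. -/
theorem curvature_operator_diagonal_block
    {V : Type*} [NormedAddCommGroup V] [InnerProductSpace ℝ V] [FiniteDimensional ℝ V]
    {ι : Type*} (Vs : ι → Submodule ℝ V)
    (R : V →ₗ[ℝ] V →ₗ[ℝ] (V →ₗ[ℝ] V))
    (halt : ∀ X Y : V, R X Y = -R Y X)
    (hskew : ∀ X Y : V, LinearMap.adjoint (R X Y) = -(R X Y))
    (hpair : ∀ X Y Z W : V, ⟪R X Y Z, W⟫ = ⟪R Z W X, Y⟫)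
    (hbianchi : ∀ X Y Z : V, R X Y Z + R Y Z X + R Z X Y = 0)
    (hortho : ∀ i j, i ≠ j → ∀ x ∈ Vs i, ∀ y ∈ Vs j, ⟪x, y⟫ = 0)
    (hspan : (⨆ i, Vs i) = ⊤)
    (hinv : ∀ i (X Y : V), (Vs i).map (R X Y) ≤ Vs i)
    {i j : ι} (hij : j ≠ i) {X₁ X₂ Y : V}
    (hX₁ : X₁ ∈ Vs i) (hX₂ : X₂ ∈ Vs i) (hY : Y ∈ Vs j) :
    R X₁ X₂ Y = 0 := by
  have h1 : R X₂ Y = 0 :=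
    curvature_off_diagonal_vanish Vs R hpair hortho hinv hij.symm hX₂ hY
  have h2 : R Y X₁ = 0 := by
    rw [halt]
    rw [curvature_off_diagonal_vanish Vs R hpair hortho hinv hij.symm hX₁ hY]
    simp
  have := hbianchi X₁ X₂ Y
  rw [h1, h2] at this
  simpa using this
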